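/- arXiv:1204.5109 — 3 statements merged into one kernel-verified Lean document; each statement's English description precedes it below -/
import Mathlib

section
/- For all θ ∈ (0, π), sin(θ) · |log(tan(θ/2))| ≤ 1. -/
lemma aux_two_mul_log_le (t : ℝ) (ht : 0 < t) :
    2 * t * |Real.log t| ≤ 1 + t ^ 2 := by
  set u := Real.sqrt t with hu
  have hu0 : 0 < u := Real.sqrt_pos.mpr ht
  have hut : u ^ 2 = t := Real.sq_sqrt ht.le
  have hlt : Real.log t = 2 * Real.log u := by
    rw [← hut, Real.log_pow]; push_cast; ring
  rcases le_or_gt 1 t with h1 | h1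
  · rw [abs_of_nonneg (Real.log_nonneg h1)]
    have hlog : Real.log u ≤ u - 1 := Real.log_le_sub_one_of_pos hu0
    have h4 : 4 * u ^ 2 * Real.log u ≤ 4 * u ^ 2 * (u - 1) :=
      mul_le_mul_of_nonneg_left hlog (by positivity)
    nlinarith [sq_nonneg (u * (u - 2)), hut]
  · rw [abs_of_nonpos (Real.log_nonpos ht.le h1.le)]
    have hlogu : Real.log (1 / u) ≤ 1 / u - 1 :=
      Real.log_le_sub_one_of_pos (by positivity)
    rw [Real.log_div one_ne_zero hu0.ne', Real.log_one] at hlogu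
    have h2 : -Real.log u ≤ 1 / u - 1 := by linarith
    have h4 : 4 * u ^ 2 * (-Real.log u) ≤ 4 * u ^ 2 * (1 / u - 1) :=
      mul_le_mul_of_nonneg_left h2 (by positivity)
    have h5 : 4 * u ^ 2 * (1 / u - 1) = 4 * u - 4 * u ^ 2 := by
      field_simp
    rw [hlt, ← hut]
    nlinarith [sq_nonneg (2 * u - 1), sq_nonneg (u ^ 2)]

/-- For all `θ ∈ (0, π)`, `sin θ · |log (tan (θ/2))| ≤ 1`. -/
theorem sin_mul_abs_log_tan_half_le_one (θ : ℝ) (h0 : 0 < θ) (hπ : θ < Real.pi) :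
    Real.sin θ * |Real.log (Real.tan (θ / 2))| ≤ 1 := by
  have hh0 : 0 < θ / 2 := by linarith
  have hh1 : θ / 2 < Real.pi / 2 := by linarith
  have hcos : 0 < Real.cos (θ / 2) := Real.cos_pos_of_mem_Ioo ⟨by linarith, hh1⟩
  have hsin : 0 < Real.sin (θ / 2) := Real.sin_pos_of_pos_of_lt_pi hh0 (by linarith)
  have ht : 0 < Real.tan (θ / 2) := by
    rw [Real.tan_eq_sin_div_cos]; exact div_pos hsin hcos
  set t := Real.tan (θ / 2) with htdef
  have hsinθ : Real.sin θ = 2 * t / (1 + t ^ 2) := by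
    have h2 : Real.sin θ = 2 * Real.sin (θ / 2) * Real.cos (θ / 2) := by
      rw [← Real.sin_two_mul]; ring_nf
    have hpyth : Real.sin (θ / 2) ^ 2 + Real.cos (θ / 2) ^ 2 = 1 :=
      Real.sin_sq_add_cos_sq _
    rw [h2, htdef, Real.tan_eq_sin_div_cos]
    field_simp
    nlinarith [hpyth]
  rw [hsinθ, div_mul_eq_mul_div, div_le_one (by positivity)]
  exact aux_two_mul_log_le t ht
end

section
/- There exists an absolute constant C > 0 such that for every continuously differentiable real-valued function f on [0, π], ∫_0^π f(θ)² dθ ≤ C · [ ∫_0^π f(θ)² sin θ dθ + (∫_0^π f(θ)² sin θ dθ)^{1/2} · (∫_0^π f'(θ)² sin θ dθ)^{1/2} ]. -/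
open MeasureTheory intervalIntegral

private lemma aux_memL2 {u : ℝ → ℝ} (hu : ContinuousOn u (Set.Icc 0 Real.pi)) :
    MemLp u (ENNReal.ofReal 2) (volume.restrict (Set.Ioc (0:ℝ) Real.pi)) := by
  haveI : IsFiniteMeasure (volume.restrict (Set.Ioc (0:ℝ) Real.pi)) :=
    ⟨by rw [Measure.restrict_apply_univ]; exact measure_Ioc_lt_top⟩
  obtain ⟨M, hM⟩ := isCompact_Icc.exists_bound_of_continuousOn hu
  refine MemLp.of_bound ?_ M ?_
  · exact (hu.mono Set.Ioc_subset_Icc_self).aestronglyMeasurable measurableSet_Ioc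
  · filter_upwards [ae_restrict_mem measurableSet_Ioc] with x hx
    exact hM x (Set.Ioc_subset_Icc_self hx)

/-- Weighted trace-type inequality: there is an absolute constant `C > 0` such that for
every `C¹` function `f` on `[0, π]`,
`∫_0^π f² ≤ C [ ∫_0^π f² sin + (∫_0^π f² sin)^{1/2} (∫_0^π f'² sin)^{1/2} ]`. -/
theorem weighted_trace_inequality :
    ∃ C : ℝ, 0 < C ∧ ∀ f : ℝ → ℝ,
      ContDiffOn ℝ 1 f (Set.Icc 0 Real.pi) →
      (∫ θ in (0 : ℝ)..Real.pi, f θ ^ 2)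
        ≤ C * ((∫ θ in (0 : ℝ)..Real.pi, f θ ^ 2 * Real.sin θ)
          + Real.sqrt (∫ θ in (0 : ℝ)..Real.pi, f θ ^ 2 * Real.sin θ)
            * Real.sqrt (∫ θ in (0 : ℝ)..Real.pi, (deriv f θ) ^ 2 * Real.sin θ)) := by
  refine ⟨2, two_pos, fun f hf => ?_⟩
  have hπ : (0:ℝ) ≤ Real.pi := Real.pi_pos.le
  have hUD : UniqueDiffOn ℝ (Set.Icc (0:ℝ) Real.pi) := uniqueDiffOn_Icc Real.pi_pos
  set g : ℝ → ℝ := derivWithin f (Set.Icc 0 Real.pi) with hgdef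
  have hfc : ContinuousOn f (Set.Icc 0 Real.pi) := hf.continuousOn
  have hgc : ContinuousOn g (Set.Icc 0 Real.pi) := hf.continuousOn_derivWithin hUD le_rfl
  have hder : ∀ x ∈ Set.Ioo (0:ℝ) Real.pi, HasDerivAt f (g x) x := by
    intro x hx
    have hmem : Set.Icc (0:ℝ) Real.pi ∈ nhds x := Icc_mem_nhds hx.1 hx.2
    have hd : DifferentiableWithinAt ℝ f (Set.Icc 0 Real.pi) x :=
      (hf.differentiableOn one_ne_zero) x (Set.mem_Icc_of_Ioo hx)
    have hda : DifferentiableAt ℝ f x := hd.differentiableAt hmem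
    have : HasDerivAt f (deriv f x) x := hda.hasDerivAt
    rwa [hgdef, derivWithin_of_mem_nhds hmem]
  -- notation
  set X : ℝ → ℝ := fun θ => 2 * (f θ ^ 2 * Real.sin θ ^ 2)
      - 2 * (f θ * g θ * (Real.sin θ * Real.cos θ)) with hXdef
  set G : ℝ → ℝ := fun θ => 2 * f θ * g θ * (Real.sin θ * Real.cos θ)
      + f θ ^ 2 * (Real.cos θ ^ 2 - Real.sin θ ^ 2) with hGdef
  have hsinc : ContinuousOn Real.sin (Set.Icc (0:ℝ) Real.pi) := Real.continuous_sin.continuousOn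
  have hcosc : ContinuousOn Real.cos (Set.Icc (0:ℝ) Real.pi) := Real.continuous_cos.continuousOn
  have hXc : ContinuousOn X (Set.Icc 0 Real.pi) := by
    apply ContinuousOn.sub
    · exact continuousOn_const.mul ((hfc.pow 2).mul (hsinc.pow 2))
    · exact continuousOn_const.mul ((hfc.mul hgc).mul (hsinc.mul hcosc))
  have hGc : ContinuousOn G (Set.Icc 0 Real.pi) := by
    apply ContinuousOn.add
    · exact ((continuousOn_const.mul hfc).mul hgc).mul (hsinc.mul hcosc)
    · exact (hfc.pow 2).mul ((hcosc.pow 2).sub (hsinc.pow 2))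
  have huIcc : Set.uIcc (0:ℝ) Real.pi = Set.Icc 0 Real.pi := Set.uIcc_of_le hπ
  have hXi : IntervalIntegrable X volume 0 Real.pi :=
    (huIcc ▸ hXc).intervalIntegrable
  have hGi : IntervalIntegrable G volume 0 Real.pi :=
    (huIcc ▸ hGc).intervalIntegrable
  -- FTC: ∫ G = 0
  have hG0 : (∫ θ in (0:ℝ)..Real.pi, G θ) = 0 := by
    have hFc : ContinuousOn (fun θ => f θ ^ 2 * (Real.sin θ * Real.cos θ))
        (Set.Icc 0 Real.pi) := (hfc.pow 2).mul (hsinc.mul hcosc)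
    have := integral_eq_sub_of_hasDeriv_right_of_le hπ hFc
      (f' := G) (fun x hx => by
        have h1 : HasDerivAt (fun θ => f θ ^ 2) (2 * f x * g x) x := by
          have := (hder x hx).fun_pow 2
          simpa [mul_comm, mul_assoc] using this
        have h2 : HasDerivAt (fun θ => Real.sin θ * Real.cos θ)
            (Real.cos x * Real.cos x + Real.sin x * (-Real.sin x)) x :=
          (Real.hasDerivAt_sin x).mul (Real.hasDerivAt_cos x)
        have h3 : HasDerivAt (fun θ => f θ ^ 2 * (Real.sin θ * Real.cos θ)) _ x := h1.fun_mul h2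
        have h4 : HasDerivAt (fun θ => f θ ^ 2 * (Real.sin θ * Real.cos θ)) (G x) x := by
          convert h3 using 1
          simp only [hGdef]
          ring
        exact h4.hasDerivWithinAt) hGi
    rw [this]
    simp [Real.sin_pi]
  -- identity: ∫ f² = ∫ X
  have hident : (∫ θ in (0:ℝ)..Real.pi, f θ ^ 2) = ∫ θ in (0:ℝ)..Real.pi, X θ := by
    have h1 : (∫ θ in (0:ℝ)..Real.pi, f θ ^ 2)
        = ∫ θ in (0:ℝ)..Real.pi, (X θ + G θ) := by
      apply intervalIntegral.integral_congr
      intro θ _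
      simp only [hXdef, hGdef]
      have := Real.sin_sq_add_cos_sq θ
      nlinarith [this]
    rw [h1, intervalIntegral.integral_add hXi hGi, hG0, add_zero]
  -- abbreviations
  set A : ℝ := ∫ θ in (0:ℝ)..Real.pi, f θ ^ 2 * Real.sin θ with hAdef
  have hfsi : IntervalIntegrable (fun θ => f θ ^ 2 * Real.sin θ) volume 0 Real.pi :=
    (huIcc ▸ ((hfc.pow 2).mul hsinc)).intervalIntegrable
  have hfs2i : IntervalIntegrable (fun θ => f θ ^ 2 * Real.sin θ ^ 2) volume 0 Real.pi :=
    (huIcc ▸ ((hfc.pow 2).mul (hsinc.pow 2))).intervalIntegrable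
  have hgsi : IntervalIntegrable (fun θ => g θ ^ 2 * Real.sin θ) volume 0 Real.pi :=
    (huIcc ▸ ((hgc.pow 2).mul hsinc)).intervalIntegrable
  have hprodi : IntervalIntegrable (fun θ => f θ * g θ * (Real.sin θ * Real.cos θ))
      volume 0 Real.pi :=
    (huIcc ▸ ((hfc.mul hgc).mul (hsinc.mul hcosc))).intervalIntegrable
  have hA0 : 0 ≤ A := by
    apply intervalIntegral.integral_nonneg hπ
    intro x hx
    exact mul_nonneg (sq_nonneg _) (Real.sin_nonneg_of_nonneg_of_le_pi hx.1 hx.2)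
  have hB0 : 0 ≤ ∫ θ in (0:ℝ)..Real.pi, g θ ^ 2 * Real.sin θ := by
    apply intervalIntegral.integral_nonneg hπ
    intro x hx
    exact mul_nonneg (sq_nonneg _) (Real.sin_nonneg_of_nonneg_of_le_pi hx.1 hx.2)
  -- bound 1 : ∫ f² sin² ≤ A
  have hbd1 : (∫ θ in (0:ℝ)..Real.pi, f θ ^ 2 * Real.sin θ ^ 2) ≤ A := by
    apply intervalIntegral.integral_mono_on hπ hfs2i hfsi
    intro x hx
    have hs0 : 0 ≤ Real.sin x := Real.sin_nonneg_of_nonneg_of_le_pi hx.1 hx.2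
    have hs1 : Real.sin x ≤ 1 := Real.sin_le_one x
    nlinarith [mul_le_mul_of_nonneg_left hs1 (mul_nonneg (sq_nonneg (f x)) hs0)]
  -- Cauchy-Schwarz bound
  set u : ℝ → ℝ := fun x => |f x| * Real.sqrt (Real.sin x) with hudef
  set v : ℝ → ℝ := fun x => |g x| * Real.sqrt (Real.sin x) with hvdef
  have huc : ContinuousOn u (Set.Icc 0 Real.pi) :=
    hfc.abs.mul (Real.continuous_sqrt.comp_continuousOn hsinc)
  have hvc : ContinuousOn v (Set.Icc 0 Real.pi) :=
    hgc.abs.mul (Real.continuous_sqrt.comp_continuousOn hsinc)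
  have huvi : IntervalIntegrable (fun x => u x * v x) volume 0 Real.pi :=
    (huIcc ▸ (huc.mul hvc)).intervalIntegrable
  have habsi : IntervalIntegrable (fun x => |f x * g x * (Real.sin x * Real.cos x)|)
      volume 0 Real.pi := (huIcc ▸ ((hfc.mul hgc).mul (hsinc.mul hcosc)).abs).intervalIntegrable
  have hCS : |∫ θ in (0:ℝ)..Real.pi, f θ * g θ * (Real.sin θ * Real.cos θ)|
      ≤ Real.sqrt A * Real.sqrt (∫ θ in (0:ℝ)..Real.pi, g θ ^ 2 * Real.sin θ) := by
    have step1 : |∫ θ in (0:ℝ)..Real.pi, f θ * g θ * (Real.sin θ * Real.cos θ)|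
        ≤ ∫ θ in (0:ℝ)..Real.pi, |f θ * g θ * (Real.sin θ * Real.cos θ)| :=
      intervalIntegral.abs_integral_le_integral_abs hπ
    have step2 : (∫ θ in (0:ℝ)..Real.pi, |f θ * g θ * (Real.sin θ * Real.cos θ)|)
        ≤ ∫ θ in (0:ℝ)..Real.pi, u θ * v θ := by
      apply intervalIntegral.integral_mono_on hπ habsi huvi
      intro x hx
      have hs0 : 0 ≤ Real.sin x := Real.sin_nonneg_of_nonneg_of_le_pi hx.1 hx.2
      have hsq : Real.sqrt (Real.sin x) * Real.sqrt (Real.sin x) = Real.sin x :=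
        Real.mul_self_sqrt hs0
      have hc1 : |Real.cos x| ≤ 1 := Real.abs_cos_le_one x
      calc |f x * g x * (Real.sin x * Real.cos x)|
          = |f x| * |g x| * (Real.sin x * |Real.cos x|) := by
            rw [abs_mul, abs_mul, abs_mul, abs_of_nonneg hs0]
        _ ≤ |f x| * |g x| * (Real.sin x * 1) := by
            have h1 : (0:ℝ) ≤ |f x| * |g x| := mul_nonneg (abs_nonneg _) (abs_nonneg _)
            have h2 : Real.sin x * |Real.cos x| ≤ Real.sin x * 1 :=
              mul_le_mul_of_nonneg_left hc1 hs0
            exact mul_le_mul_of_nonneg_left h2 h1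
        _ = u x * v x := by
            simp only [hudef, hvdef]
            linear_combination (-(|f x| * |g x|)) * hsq
    have conj : Real.HolderConjugate 2 2 := Real.HolderConjugate.two_two
    have hmu : MemLp u (ENNReal.ofReal 2) (volume.restrict (Set.Ioc (0:ℝ) Real.pi)) :=
      aux_memL2 huc
    have hmv : MemLp v (ENNReal.ofReal 2) (volume.restrict (Set.Ioc (0:ℝ) Real.pi)) :=
      aux_memL2 hvc
    have holder := MeasureTheory.integral_mul_le_Lp_mul_Lq_of_nonneg conj
      (μ := volume.restrict (Set.Ioc (0:ℝ) Real.pi))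
      (Filter.Eventually.of_forall fun x =>
        mul_nonneg (abs_nonneg _) (Real.sqrt_nonneg _))
      (Filter.Eventually.of_forall fun x =>
        mul_nonneg (abs_nonneg _) (Real.sqrt_nonneg _)) hmu hmv
    have e1 : (∫ x in Set.Ioc (0:ℝ) Real.pi, u x ^ (2:ℝ))
        = ∫ θ in (0:ℝ)..Real.pi, f θ ^ 2 * Real.sin θ := by
      rw [intervalIntegral.integral_of_le hπ]
      apply setIntegral_congr_fun measurableSet_Ioc
      intro x hx
      have hs0 : 0 ≤ Real.sin x := Real.sin_nonneg_of_nonneg_of_le_pi hx.1.le hx.2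
      simp only [hudef]
      rw [show (2:ℝ) = ((2:ℕ):ℝ) by norm_num, Real.rpow_natCast]
      rw [mul_pow, sq_abs, Real.sq_sqrt hs0]
    have e2 : (∫ x in Set.Ioc (0:ℝ) Real.pi, v x ^ (2:ℝ))
        = ∫ θ in (0:ℝ)..Real.pi, g θ ^ 2 * Real.sin θ := by
      rw [intervalIntegral.integral_of_le hπ]
      apply setIntegral_congr_fun measurableSet_Ioc
      intro x hx
      have hs0 : 0 ≤ Real.sin x := Real.sin_nonneg_of_nonneg_of_le_pi hx.1.le hx.2
      simp only [hvdef]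
      rw [show (2:ℝ) = ((2:ℕ):ℝ) by norm_num, Real.rpow_natCast]
      rw [mul_pow, sq_abs, Real.sq_sqrt hs0]
    have e3 : (∫ x in Set.Ioc (0:ℝ) Real.pi, u x * v x)
        = ∫ θ in (0:ℝ)..Real.pi, u θ * v θ := (intervalIntegral.integral_of_le hπ).symm
    rw [e1, e2, e3] at holder
    calc |∫ θ in (0:ℝ)..Real.pi, f θ * g θ * (Real.sin θ * Real.cos θ)|
        ≤ ∫ θ in (0:ℝ)..Real.pi, u θ * v θ := le_trans step1 step2
      _ ≤ A ^ ((1:ℝ)/2) * (∫ θ in (0:ℝ)..Real.pi, g θ ^ 2 * Real.sin θ) ^ ((1:ℝ)/2) := holder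
      _ = Real.sqrt A * Real.sqrt (∫ θ in (0:ℝ)..Real.pi, g θ ^ 2 * Real.sin θ) := by
          rw [Real.sqrt_eq_rpow, Real.sqrt_eq_rpow]
  -- replace deriv f by g in the goal's integral
  have hBeq : (∫ θ in (0:ℝ)..Real.pi, (deriv f θ) ^ 2 * Real.sin θ)
      = ∫ θ in (0:ℝ)..Real.pi, g θ ^ 2 * Real.sin θ := by
    apply intervalIntegral.integral_congr_ae
    have hae : ∀ᵐ x : ℝ, x ≠ Real.pi := by
      refine (ae_iff).mpr ?_
      have : {a : ℝ | ¬ a ≠ Real.pi} = {Real.pi} := by ext y; simp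
      rw [this]
      exact measure_singleton _
    filter_upwards [hae] with x hx hxI
    rw [Set.uIoc_of_le hπ] at hxI
    have hxo : x ∈ Set.Ioo (0:ℝ) Real.pi := ⟨hxI.1, lt_of_le_of_ne hxI.2 hx⟩
    rw [(hder x hxo).deriv]
  -- split ∫ X
  have hXsplit : (∫ θ in (0:ℝ)..Real.pi, X θ)
      = 2 * (∫ θ in (0:ℝ)..Real.pi, f θ ^ 2 * Real.sin θ ^ 2)
        - 2 * (∫ θ in (0:ℝ)..Real.pi, f θ * g θ * (Real.sin θ * Real.cos θ)) := by
    rw [hXdef]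
    rw [intervalIntegral.integral_sub (hfs2i.const_mul 2) (hprodi.const_mul 2),
      intervalIntegral.integral_const_mul, intervalIntegral.integral_const_mul]
  -- conclude
  rw [hident, hXsplit, hBeq]
  have habs : -(∫ θ in (0:ℝ)..Real.pi, f θ * g θ * (Real.sin θ * Real.cos θ))
      ≤ Real.sqrt A * Real.sqrt (∫ θ in (0:ℝ)..Real.pi, g θ ^ 2 * Real.sin θ) :=
    le_trans (neg_le_abs _) hCS
  linarith [hbd1, habs]
end

section
/- Let N ≥ 2 and let f ∈ C¹([0, π], ℝ) satisfy f(0) = f(π) = 0. Then ∫_0^π f(θ)² / sin³(θ) dθ ≤ 3 ∫_0^π f(θ)² / sin(θ) dθ + 2 ∫_0^π f'(θ)² / sin(θ) dθ, provided all three integrals are finite. -/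
open MeasureTheory Real Set Filter Topology

lemma abs_log_le' {t : ℝ} (ht : 0 < t) : |Real.log t| ≤ |t - t⁻¹| / 2 := by
  have h1 : |Real.log t| ≤ Real.sinh |Real.log t| := by
    rcases eq_or_lt_of_le (abs_nonneg (Real.log t)) with h | h
    · simp [← h]
    · exact (Real.self_lt_sinh_iff.mpr h).le
  have h2 : Real.sinh |Real.log t| = |Real.sinh (Real.log t)| := (Real.abs_sinh _).symm
  have h3 : Real.sinh (Real.log t) = (t - t⁻¹) / 2 := by
    rw [Real.sinh_eq, Real.exp_log ht, Real.exp_neg, Real.exp_log ht]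
  rw [h2, h3] at h1
  calc |Real.log t| ≤ |(t - t⁻¹)/2| := h1
    _ = |t - t⁻¹| / 2 := by rw [abs_div]; norm_num

lemma sin_abs_log_tan_le {θ : ℝ} (h : θ ∈ Set.Ioo 0 π) :
    Real.sin θ * |Real.log (Real.tan (θ/2))| ≤ 1 := by
  obtain ⟨h0, h1⟩ := h
  have hs : 0 < Real.sin (θ/2) := Real.sin_pos_of_pos_of_lt_pi (by linarith) (by linarith [Real.pi_pos])
  have hc : 0 < Real.cos (θ/2) := Real.cos_pos_of_mem_Ioo ⟨by linarith [Real.pi_pos], by linarith⟩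
  have ht : 0 < Real.tan (θ/2) := by rw [Real.tan_eq_sin_div_cos]; positivity
  have hsin : Real.sin θ = 2 * Real.sin (θ/2) * Real.cos (θ/2) := by
    have := Real.sin_two_mul (θ/2); rw [show 2 * (θ/2) = θ by ring] at this; exact this
  have hcos : Real.cos θ = Real.cos (θ/2)^2 - Real.sin (θ/2)^2 := by
    have := Real.cos_two_mul' (θ/2); rw [show 2 * (θ/2) = θ by ring] at this; exact this
  have key := abs_log_le' ht
  have hsinpos : 0 < Real.sin θ := Real.sin_pos_of_pos_of_lt_pi h0 h1
  calc Real.sin θ * |Real.log (Real.tan (θ/2))|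
      ≤ Real.sin θ * (|Real.tan (θ/2) - (Real.tan (θ/2))⁻¹| / 2) :=
        mul_le_mul_of_nonneg_left key hsinpos.le
    _ = |Real.cos θ| := by
        rw [Real.tan_eq_sin_div_cos, hsin, hcos]
        have e1 : Real.sin (θ/2) / Real.cos (θ/2) - (Real.sin (θ/2) / Real.cos (θ/2))⁻¹
            = (Real.sin (θ/2)^2 - Real.cos (θ/2)^2) / (Real.sin (θ/2) * Real.cos (θ/2)) := by
          field_simp
        rw [e1, abs_div, abs_of_pos (by positivity : (0:ℝ) < Real.sin (θ/2) * Real.cos (θ/2))]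
        rw [show Real.sin (θ/2)^2 - Real.cos (θ/2)^2 = -(Real.cos (θ/2)^2 - Real.sin (θ/2)^2) by ring, abs_neg]
        field_simp
    _ ≤ 1 := Real.abs_cos_le_one θ

noncomputable def Gaux (θ : ℝ) : ℝ :=
  -Real.cos θ / (2 * Real.sin θ ^ 2) - Real.log (Real.tan (θ/2)) / 2

lemma Gaux_hasDerivAt {θ : ℝ} (h : θ ∈ Set.Ioo 0 π) :
    HasDerivAt Gaux (Real.cos θ ^ 2 / Real.sin θ ^ 3) θ := by
  obtain ⟨h0, h1⟩ := h
  have hs : 0 < Real.sin (θ/2) := Real.sin_pos_of_pos_of_lt_pi (by linarith) (by linarith [Real.pi_pos])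
  have hc : 0 < Real.cos (θ/2) := Real.cos_pos_of_mem_Ioo ⟨by linarith [Real.pi_pos], by linarith⟩
  have ht : 0 < Real.tan (θ/2) := by rw [Real.tan_eq_sin_div_cos]; positivity
  have hsinpos : 0 < Real.sin θ := Real.sin_pos_of_pos_of_lt_pi h0 h1
  have hsin2 : Real.sin θ = 2 * Real.sin (θ/2) * Real.cos (θ/2) := by
    have := Real.sin_two_mul (θ/2); rw [show 2 * (θ/2) = θ by ring] at this; exact this
  -- first part
  have hA : HasDerivAt (fun θ => -Real.cos θ / (2 * Real.sin θ ^ 2))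
      (1 / (2 * Real.sin θ) + Real.cos θ ^ 2 / Real.sin θ ^ 3) θ := by
    have h1' : HasDerivAt (fun θ => -Real.cos θ) (Real.sin θ) θ := by
      simpa using (Real.hasDerivAt_cos θ).fun_neg
    have h2' : HasDerivAt (fun θ => 2 * Real.sin θ ^ 2)
        (2 * (2 * Real.sin θ * Real.cos θ)) θ := by
      have := ((Real.hasDerivAt_sin θ).pow 2)
      simpa [mul_comm, mul_assoc, mul_left_comm] using this.const_mul 2
    have := h1'.div h2' (by positivity)
    refine this.congr_deriv ?_
    have hpyth := Real.sin_sq_add_cos_sq θ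
    field_simp
    nlinarith [hpyth]
  -- second part
  have hB : HasDerivAt (fun θ => Real.log (Real.tan (θ/2)) / 2)
      (1 / (2 * Real.sin θ)) θ := by
    have hhalf : HasDerivAt (fun θ : ℝ => θ / 2) (1/2) θ := by
      simpa using (hasDerivAt_id θ).div_const 2
    have htan : HasDerivAt Real.tan (1 / Real.cos (θ/2) ^ 2) (θ/2) :=
      Real.hasDerivAt_tan hc.ne'
    have hcomp : HasDerivAt (fun θ : ℝ => Real.tan (θ/2)) (1 / Real.cos (θ/2) ^ 2 * (1/2)) θ :=
      htan.comp (h₂ := Real.tan) θ hhalf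
    have hlog : HasDerivAt Real.log (Real.tan (θ/2))⁻¹ (Real.tan (θ/2)) :=
      Real.hasDerivAt_log ht.ne'
    have := (hlog.comp θ hcomp).div_const 2
    refine this.congr_deriv ?_
    rw [Real.tan_eq_sin_div_cos, hsin2]
    field_simp
  have := hA.sub hB
  refine this.congr_deriv ?_
  ring

lemma Gaux_abs_le {θ : ℝ} (h : θ ∈ Set.Ioo 0 π) : |Gaux θ| ≤ 1 / Real.sin θ ^ 2 := by
  have hsinpos : 0 < Real.sin θ := Real.sin_pos_of_pos_of_lt_pi h.1 h.2
  have hsin1 : Real.sin θ ≤ 1 := Real.sin_le_one θ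
  have hlog : |Real.log (Real.tan (θ/2))| ≤ 1 / Real.sin θ := by
    rw [le_div_iff₀ hsinpos, mul_comm]; exact sin_abs_log_tan_le h
  have h2 : (1/Real.sin θ)/2 ≤ 1/(2*Real.sin θ^2) := by
    rw [div_div, div_le_div_iff₀ (by positivity) (by positivity)]; nlinarith
  calc |Gaux θ| ≤ |(-Real.cos θ) / (2 * Real.sin θ ^ 2)| + |Real.log (Real.tan (θ/2)) / 2| := by
        unfold Gaux; rw [neg_div]; exact abs_sub _ _
    _ ≤ 1 / (2 * Real.sin θ ^ 2) + (1 / Real.sin θ) / 2 := by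
        apply add_le_add
        · rw [abs_div, abs_of_pos (by positivity : (0:ℝ) < 2 * Real.sin θ ^ 2)]
          gcongr
          simpa using Real.abs_cos_le_one θ
        · rw [abs_div, abs_two]; gcongr
    _ ≤ 1 / (2 * Real.sin θ ^ 2) + 1 / (2 * Real.sin θ ^ 2) := by linarith
    _ = 1 / Real.sin θ ^ 2 := by ring

lemma Gaux_prod_bound {θ : ℝ} (h : θ ∈ Set.Ioo 0 π) (u v : ℝ) :
    |2 * u * v * Gaux θ| ≤ u^2 * Real.cos θ^2 / (2 * Real.sin θ^3)
      + u^2 / (2 * Real.sin θ) + v^2 / Real.sin θ := by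
  have hsinpos : 0 < Real.sin θ := Real.sin_pos_of_pos_of_lt_pi h.1 h.2
  have hlog : |Real.log (Real.tan (θ/2))| ≤ 1 / Real.sin θ := by
    rw [le_div_iff₀ hsinpos, mul_comm]; exact sin_abs_log_tan_le h
  have step1 : |2 * u * v * Gaux θ|
      ≤ |u*v| * |Real.cos θ| / Real.sin θ^2 + |u*v| * |Real.log (Real.tan (θ/2))| := by
    unfold Gaux
    calc |2 * u * v * (-Real.cos θ / (2 * Real.sin θ ^ 2) - Real.log (Real.tan (θ/2)) / 2)|
        ≤ |2 * u * v * (-Real.cos θ / (2 * Real.sin θ ^ 2))|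
          + |2 * u * v * (Real.log (Real.tan (θ/2)) / 2)| := by
          rw [mul_sub]; exact abs_sub _ _
      _ = |u*v| * |Real.cos θ| / Real.sin θ^2 + |u*v| * |Real.log (Real.tan (θ/2))| := by
          have e1 : 2*u*v*(-Real.cos θ/(2*Real.sin θ^2)) = -((u*v)*Real.cos θ)/Real.sin θ^2 := by
            field_simp
          have e2 : 2*u*v*(Real.log (Real.tan (θ/2))/2) = (u*v)*Real.log (Real.tan (θ/2)) := by
            ring
          rw [e1, e2, abs_div, abs_neg, abs_mul, abs_mul,
            abs_of_pos (by positivity : (0:ℝ) < Real.sin θ^2)]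
          rw [abs_mul (u*v), abs_mul u v]
  have key : 2 * (|u| * |Real.cos θ|) * (|v| * Real.sin θ)
      ≤ (|u| * |Real.cos θ|)^2 + (|v| * Real.sin θ)^2 := two_mul_le_add_sq _ _
  have t1 : |u*v| * |Real.cos θ| / Real.sin θ^2
      ≤ u^2 * Real.cos θ^2 / (2 * Real.sin θ^3) + v^2 / (2 * Real.sin θ) := by
    rw [abs_mul, div_add_div _ _ (by positivity) (by positivity),
      div_le_div_iff₀ (by positivity) (by positivity)]
    have hmul := mul_le_mul_of_nonneg_left key (by positivity : (0:ℝ) ≤ Real.sin θ^3)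
    have ea : (|u| * |Real.cos θ|)^2 = u^2*Real.cos θ^2 := by rw [mul_pow, sq_abs, sq_abs]
    have eb : (|v| * Real.sin θ)^2 = v^2 * Real.sin θ^2 := by rw [mul_pow, sq_abs]
    rw [ea, eb] at hmul
    nlinarith [hmul, hsinpos, sq_nonneg (Real.sin θ)]
  have t2 : |u*v| * |Real.log (Real.tan (θ/2))| ≤ u^2 / (2*Real.sin θ) + v^2 / (2*Real.sin θ) := by
    calc |u*v| * |Real.log (Real.tan (θ/2))| ≤ |u*v| * (1 / Real.sin θ) := by
          gcongr
      _ ≤ (u^2/2 + v^2/2) * (1 / Real.sin θ) := by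
          gcongr
          rw [abs_mul]
          nlinarith [sq_nonneg (|u| - |v|), sq_abs u, sq_abs v]
      _ = u^2 / (2*Real.sin θ) + v^2 / (2*Real.sin θ) := by ring
  calc |2 * u * v * Gaux θ| ≤ _ := step1
    _ ≤ (u^2 * Real.cos θ^2 / (2 * Real.sin θ^3) + v^2 / (2 * Real.sin θ))
        + (u^2 / (2*Real.sin θ) + v^2 / (2*Real.sin θ)) := add_le_add t1 t2
    _ = u^2 * Real.cos θ^2 / (2 * Real.sin θ^3) + u^2 / (2 * Real.sin θ) + v^2 / Real.sin θ := by ring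

lemma not_integrableOn_inv_Ioo {c : ℝ} (hc : 0 < c) :
    ¬ IntegrableOn (fun x : ℝ => x⁻¹) (Set.Ioo 0 c) := by
  intro h
  have h' : IntegrableOn (fun x : ℝ => x ^ (-1 : ℝ)) (Set.Ioo 0 c) := by
    apply h.congr_fun ?_ measurableSet_Ioo
    intro x hx
    simp [Real.rpow_neg_one]
  have := (intervalIntegral.integrableOn_Ioo_rpow_iff hc).mp h'
  linarith

lemma exists_pt_zero {H : ℝ → ℝ} (hH : IntegrableOn H (Set.Ioo 0 π))
    (hpos : ∀ θ ∈ Set.Ioo 0 π, 0 ≤ H θ) {c ε : ℝ} (hc : 0 < c) (hcπ : c < π) (hε : 0 < ε) :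
    ∃ a ∈ Set.Ioo 0 c, a * H a < ε := by
  by_contra hcon
  push_neg at hcon
  have hsub : Set.Ioo 0 c ⊆ Set.Ioo 0 π := Set.Ioo_subset_Ioo le_rfl hcπ.le
  have hH' : IntegrableOn H (Set.Ioo 0 c) := hH.mono_set hsub
  have hint : IntegrableOn (fun x : ℝ => ε * x⁻¹) (Set.Ioo 0 c) := by
    apply Integrable.mono hH' ((measurable_const.mul measurable_inv).aestronglyMeasurable)
    rw [ae_restrict_iff' measurableSet_Ioo]
    filter_upwards with x hx
    have hx0 : 0 < x := hx.1
    have hb := hcon x hx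
    have h1 : ε * x⁻¹ ≤ H x := by
      rw [mul_inv_le_iff₀ hx0, mul_comm]; exact hb
    have h0 : 0 ≤ ε * x⁻¹ := by positivity
    rw [Real.norm_eq_abs, Real.norm_eq_abs]; simp only [Pi.mul_apply]; rw [abs_of_nonneg h0]
    exact h1.trans (le_abs_self _)
  have h3 : IntegrableOn (fun x : ℝ => ε⁻¹ * (ε * x⁻¹)) (Set.Ioo 0 c) := hint.const_mul ε⁻¹
  exact not_integrableOn_inv_Ioo hc
    (h3.congr_fun (fun x hx => by field_simp) measurableSet_Ioo)

lemma exists_pt_pi {H : ℝ → ℝ} (hH : IntegrableOn H (Set.Ioo 0 π))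
    (hpos : ∀ θ ∈ Set.Ioo 0 π, 0 ≤ H θ) {c ε : ℝ} (hc : 0 < c) (hcπ : c < π) (hε : 0 < ε) :
    ∃ b ∈ Set.Ioo c π, (π - b) * H b < ε := by
  by_contra hcon
  push_neg at hcon
  have hsub : Set.Ioo c π ⊆ Set.Ioo 0 π := Set.Ioo_subset_Ioo hc.le le_rfl
  have hH' : IntegrableOn H (Set.Ioo c π) := hH.mono_set hsub
  have hint : IntegrableOn (fun x : ℝ => ε * (π - x)⁻¹) (Set.Ioo c π) := by
    apply Integrable.mono hH'
      (Measurable.aestronglyMeasurable (by fun_prop))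
    rw [ae_restrict_iff' measurableSet_Ioo]
    filter_upwards with x hx
    have hx0 : 0 < π - x := by linarith [hx.2]
    have hb := hcon x hx
    have h1 : ε * (π - x)⁻¹ ≤ H x := by
      rw [mul_inv_le_iff₀ hx0, mul_comm]; exact hb
    have h0 : 0 ≤ ε * (π - x)⁻¹ := by positivity
    rw [Real.norm_eq_abs, Real.norm_eq_abs, abs_of_nonneg h0]
    exact h1.trans (le_abs_self _)
  -- transfer by reflection
  have hiv : IntervalIntegrable (fun x : ℝ => ε * (π - x)⁻¹) volume c π := by
    rw [intervalIntegrable_iff_integrableOn_Ioo_of_le hcπ.le]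
    exact hint
  have hiv2 := hiv.comp_sub_left π
  have : IntervalIntegrable (fun x : ℝ => ε * x⁻¹) volume 0 (π - c) := by
    have e : ∀ x : ℝ, ε * (π - (π - x))⁻¹ = ε * x⁻¹ := by intro x; ring_nf
    simpa [e, sub_self] using hiv2.symm
  rw [intervalIntegrable_iff_integrableOn_Ioo_of_le (by linarith)] at this
  have h3 : IntegrableOn (fun x : ℝ => ε⁻¹ * (ε * x⁻¹)) (Set.Ioo 0 (π - c)) :=
    this.const_mul ε⁻¹
  exact not_integrableOn_inv_Ioo (by linarith)
    (h3.congr_fun (fun x hx => by field_simp) measurableSet_Ioo)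

/-- For `f ∈ C¹([0,π])` with `f(0) = f(π) = 0`, and all three integrals finite,
`∫_0^π f²/sin³ ≤ 3 ∫_0^π f²/sin + 2 ∫_0^π f'²/sin`. -/
theorem weighted_sin_cubed_inequality (f : ℝ → ℝ)
    (hf : ContDiffOn ℝ 1 f (Set.Icc 0 Real.pi))
    (h0 : f 0 = 0) (hπ : f Real.pi = 0)
    (hi3 : IntegrableOn (fun θ => f θ ^ 2 / Real.sin θ ^ 3) (Set.Ioo 0 Real.pi))
    (hi1 : IntegrableOn (fun θ => f θ ^ 2 / Real.sin θ) (Set.Ioo 0 Real.pi))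
    (hi1' : IntegrableOn (fun θ => (deriv f θ) ^ 2 / Real.sin θ) (Set.Ioo 0 Real.pi)) :
    (∫ θ in Set.Ioo (0 : ℝ) Real.pi, f θ ^ 2 / Real.sin θ ^ 3)
      ≤ 3 * (∫ θ in Set.Ioo (0 : ℝ) Real.pi, f θ ^ 2 / Real.sin θ)
        + 2 * ∫ θ in Set.Ioo (0 : ℝ) Real.pi, (deriv f θ) ^ 2 / Real.sin θ := by
  have hπpos := Real.pi_pos
  set I1 := ∫ θ in Set.Ioo (0:ℝ) Real.pi, f θ ^ 2 / Real.sin θ with hI1def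
  set I1' := ∫ θ in Set.Ioo (0:ℝ) Real.pi, (deriv f θ) ^ 2 / Real.sin θ with hI1'def
  set F : ℝ → ℝ := fun x => f x ^ 2 * (Real.cos x ^ 2 / Real.sin x ^ 3) with hFdef
  have hsin : ∀ x ∈ Set.Ioo (0:ℝ) π, 0 < Real.sin x :=
    fun x hx => Real.sin_pos_of_pos_of_lt_pi hx.1 hx.2
  have hnhds : ∀ x ∈ Set.Ioo (0:ℝ) π, Set.Icc (0:ℝ) π ∈ 𝓝 x := fun x hx =>
    mem_nhds_iff.mpr ⟨Set.Ioo 0 π, Set.Ioo_subset_Icc_self, isOpen_Ioo, hx⟩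
  have hderiv : ∀ x ∈ Set.Ioo (0:ℝ) π, HasDerivAt f (deriv f x) x := fun x hx =>
    ((hf.differentiableOn one_ne_zero x (Set.Ioo_subset_Icc_self hx)).differentiableAt
      (hnhds x hx)).hasDerivAt
  have hfc : ContinuousOn f (Set.Icc 0 π) := hf.continuousOn
  have hdc : ContinuousOn (deriv f) (Set.Ioo 0 π) := by
    have h1 := hf.continuousOn_derivWithin (uniqueDiffOn_Icc hπpos) le_rfl
    exact (h1.mono Set.Ioo_subset_Icc_self).congr
      (fun x hx => (derivWithin_of_mem_nhds (hnhds x hx)).symm)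
  have hGc : ContinuousOn Gaux (Set.Ioo 0 π) := fun x hx =>
    ((Gaux_hasDerivAt hx).differentiableAt.continuousAt).continuousWithinAt
  have hFnonneg : ∀ x ∈ Set.Ioo (0:ℝ) π, 0 ≤ F x := by
    intro x hx; have := hsin x hx; positivity
  have hFc : ContinuousOn F (Set.Ioo 0 π) := by
    apply ((hfc.mono Set.Ioo_subset_Icc_self).pow 2).mul
    exact (Real.continuous_cos.continuousOn.pow 2).div
      (Real.continuous_sin.continuousOn.pow 3)
      (fun x hx => by have := hsin x hx; positivity)
  have hFint : IntegrableOn F (Set.Ioo 0 π) := by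
    apply Integrable.mono hi3 (hFc.aestronglyMeasurable measurableSet_Ioo)
    rw [ae_restrict_iff' measurableSet_Ioo]
    filter_upwards with x hx
    have hs := hsin x hx
    rw [Real.norm_eq_abs, Real.norm_eq_abs, abs_of_nonneg (hFnonneg x hx),
      abs_of_nonneg (by positivity : (0:ℝ) ≤ f x ^ 2 / Real.sin x ^ 3)]
    calc f x ^ 2 * (Real.cos x ^ 2 / Real.sin x ^ 3)
        ≤ f x ^ 2 * (1 / Real.sin x ^ 3) := by
          gcongr <;> first | positivity | exact Real.cos_sq_le_one x
      _ = f x ^ 2 / Real.sin x ^ 3 := by ring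
  -- nonnegativity of the three integrands (a.e.)
  have hae1 : 0 ≤ᵐ[volume.restrict (Set.Ioo (0:ℝ) π)] fun θ => f θ ^ 2 / Real.sin θ := by
    rw [EventuallyLE, ae_restrict_iff' measurableSet_Ioo]
    filter_upwards with x hx
    have := hsin x hx; positivity
  have hae1' : 0 ≤ᵐ[volume.restrict (Set.Ioo (0:ℝ) π)] fun θ => (deriv f θ) ^ 2 / Real.sin θ := by
    rw [EventuallyLE, ae_restrict_iff' measurableSet_Ioo]
    filter_upwards with x hx
    have := hsin x hx; positivity
  have hI1nonneg : 0 ≤ I1 := by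
    rw [hI1def]
    apply setIntegral_nonneg measurableSet_Ioo
    intro x hx; have := hsin x hx; positivity
  -- KEY interval estimate
  have key : ∀ a b : ℝ, 0 < a → a ≤ b → b < π →
      (∫ x in a..b, F x) ≤ 2*(f b ^ 2 * Gaux b - f a ^ 2 * Gaux a) + I1 + 2*I1' := by
    intro a b ha hab hbπ
    have hIcc : Set.Icc a b ⊆ Set.Ioo 0 π := fun x hx =>
      ⟨lt_of_lt_of_le ha hx.1, lt_of_le_of_lt hx.2 hbπ⟩
    have huIcc : Set.uIcc a b = Set.Icc a b := Set.uIcc_of_le hab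
    have hfC : ContinuousOn (fun x => f x ^ 2) (Set.Icc a b) :=
      (hfc.mono (hIcc.trans Set.Ioo_subset_Icc_self)).pow 2
    have hdC : ContinuousOn (deriv f) (Set.Icc a b) := hdc.mono hIcc
    have hsC : ∀ x ∈ Set.Icc a b, 0 < Real.sin x := fun x hx => hsin x (hIcc hx)
    have hvC' : ContinuousOn (fun x => Real.cos x ^ 2 / Real.sin x ^ 3) (Set.Icc a b) :=
      (Real.continuous_cos.continuousOn.pow 2).div
        (Real.continuous_sin.continuousOn.pow 3)
        (fun x hx => by have := hsC x hx; positivity)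
    have huC' : ContinuousOn (fun x => 2 * f x * deriv f x) (Set.Icc a b) :=
      ((continuousOn_const.mul (hfc.mono (hIcc.trans Set.Ioo_subset_Icc_self)))).mul hdC
    have hGC : ContinuousOn Gaux (Set.Icc a b) := hGc.mono hIcc
    have hFC : ContinuousOn F (Set.Icc a b) := hFc.mono hIcc
    have hmm : Set.Ioo (min a b) (max a b) ⊆ Set.Ioo 0 π := by
      rw [min_eq_left hab, max_eq_right hab]
      exact fun x hx => hIcc ⟨hx.1.le, hx.2.le⟩
    have hibp := intervalIntegral.integral_mul_deriv_eq_deriv_mul_of_hasDerivAt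
      (u := fun x => f x ^ 2) (v := Gaux) (u' := fun x => 2 * f x * deriv f x)
      (v' := fun x => Real.cos x ^ 2 / Real.sin x ^ 3)
      (by rw [huIcc]; exact hfC) (by rw [huIcc]; exact hGC)
      (fun x hx => by
        have hx' : x ∈ Set.Ioo 0 π := hmm hx
        have := (hderiv x hx').pow 2
        refine this.congr_deriv ?_
        rw [show (2:ℕ) - 1 = 1 from rfl, pow_one]; push_cast; ring)
      (fun x hx => Gaux_hasDerivAt (hmm hx))
      (ContinuousOn.intervalIntegrable (huIcc ▸ huC'))
      (ContinuousOn.intervalIntegrable (huIcc ▸ hvC'))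
    -- pointwise bound for the second integral
    set bound : ℝ → ℝ :=
      fun x => F x / 2 + (f x ^ 2 / Real.sin x) / 2 + (deriv f x) ^ 2 / Real.sin x with hbdef
    have hboundC : ContinuousOn bound (Set.Icc a b) := by
      apply ((hFC.div_const 2).add
        (((hfC.div (Real.continuous_sin.continuousOn) (fun x hx => (hsC x hx).ne')).div_const 2))).add
      exact (hdC.pow 2).div (Real.continuous_sin.continuousOn) (fun x hx => (hsC x hx).ne')
    have hptw : ∀ x ∈ Set.Icc a b, -(bound x) ≤ 2 * f x * deriv f x * Gaux x := by
      intro x hx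
      have h1 := Gaux_prod_bound (hIcc hx) (f x) (deriv f x)
      have h2 : f x ^ 2 * Real.cos x ^ 2 / (2 * Real.sin x ^ 3)
          + f x ^ 2 / (2 * Real.sin x) + (deriv f x) ^ 2 / Real.sin x = bound x := by
        rw [hbdef, hFdef]; ring
      rw [h2] at h1
      calc -(bound x) ≤ -|2 * f x * deriv f x * Gaux x| := neg_le_neg h1
        _ ≤ 2 * f x * deriv f x * Gaux x := neg_abs_le _
    have hmono := intervalIntegral.integral_mono_on (μ := volume) hab
      (f := fun x => -(bound x)) (g := fun x => 2 * f x * deriv f x * Gaux x)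
      (ContinuousOn.intervalIntegrable (huIcc ▸ hboundC.neg))
      (ContinuousOn.intervalIntegrable (huIcc ▸ huC'.mul hGC))
      hptw
    rw [intervalIntegral.integral_neg] at hmono
    -- split the bound integral
    have hint1 : IntervalIntegrable (fun x => F x / 2) volume a b :=
      ContinuousOn.intervalIntegrable (huIcc ▸ hFC.div_const 2)
    have hint2 : IntervalIntegrable (fun x => (f x ^ 2 / Real.sin x) / 2) volume a b :=
      ContinuousOn.intervalIntegrable (huIcc ▸ ((hfC.div (Real.continuous_sin.continuousOn)
        (fun x hx => (hsC x hx).ne')).div_const 2))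
    have hint3 : IntervalIntegrable (fun x => (deriv f x) ^ 2 / Real.sin x) volume a b :=
      ContinuousOn.intervalIntegrable (huIcc ▸ ((hdC.pow 2).div (Real.continuous_sin.continuousOn)
        (fun x hx => (hsC x hx).ne')))
    have hsplitbd : (∫ x in a..b, bound x)
        = (∫ x in a..b, F x) / 2 + (∫ x in a..b, f x ^ 2 / Real.sin x) / 2
          + ∫ x in a..b, (deriv f x) ^ 2 / Real.sin x := by
      rw [hbdef]
      rw [intervalIntegral.integral_add (hint1.add hint2) hint3,
        intervalIntegral.integral_add hint1 hint2,
        intervalIntegral.integral_div, intervalIntegral.integral_div]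
    -- compare with global integrals
    have hJ1 : (∫ x in a..b, f x ^ 2 / Real.sin x) ≤ I1 := by
      rw [intervalIntegral.integral_of_le hab, hI1def]
      exact setIntegral_mono_set hi1 hae1
        (HasSubset.Subset.eventuallyLE (fun x hx =>
          ⟨lt_of_lt_of_le ha hx.1.le, lt_of_le_of_lt hx.2 hbπ⟩))
    have hJ2 : (∫ x in a..b, (deriv f x) ^ 2 / Real.sin x) ≤ I1' := by
      rw [intervalIntegral.integral_of_le hab, hI1'def]
      exact setIntegral_mono_set hi1' hae1'
        (HasSubset.Subset.eventuallyLE (fun x hx =>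
          ⟨lt_of_lt_of_le ha hx.1.le, lt_of_le_of_lt hx.2 hbπ⟩))
    have hF2 : (∫ x in a..b, F x) = f b ^ 2 * Gaux b - f a ^ 2 * Gaux a
        - ∫ x in a..b, 2 * f x * deriv f x * Gaux x := hibp
    linarith [hmono, hsplitbd, hJ1, hJ2, hF2]
  -- nonnegativity of H := f^2/sin^3
  have hHnonneg : ∀ θ ∈ Set.Ioo (0:ℝ) π, 0 ≤ f θ ^ 2 / Real.sin θ ^ 3 := by
    intro x hx; have := hsin x hx; positivity
  -- boundary smallness
  have hbdry : ∀ x ∈ Set.Ioo (0:ℝ) π, |f x ^ 2 * Gaux x| ≤ (f x ^ 2 / Real.sin x ^ 3) * Real.sin x := by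
    intro x hx
    have hs := hsin x hx
    calc |f x ^ 2 * Gaux x| = f x ^ 2 * |Gaux x| := by
          rw [abs_mul, abs_of_nonneg (by positivity : (0:ℝ) ≤ f x ^ 2)]
      _ ≤ f x ^ 2 * (1 / Real.sin x ^ 2) := by
          gcongr <;> first | positivity | exact Gaux_abs_le hx
      _ = (f x ^ 2 / Real.sin x ^ 3) * Real.sin x := by field_simp
  -- exhausting sequence
  set S : ℕ → Set ℝ := fun n => Set.Ioo (π/(n+3 : ℝ)) (π - π/(n+3 : ℝ)) with hSdef
  have hc3 : ∀ n : ℕ, 0 < π/(n+3 : ℝ) := fun n => by positivity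
  have hc3' : ∀ n : ℕ, π/(n+3 : ℝ) ≤ π/3 := by
    intro n
    apply div_le_div_of_nonneg_left hπpos.le (by norm_num)
    · have : (0:ℝ) ≤ (n:ℝ) := Nat.cast_nonneg n
      linarith
  have hcπ : ∀ n : ℕ, π/(n+3 : ℝ) < π := fun n => by
    have := hc3' n; have := hc3 n; linarith
  have hcd : ∀ n : ℕ, π/(n+3 : ℝ) < π - π/(n+3 : ℝ) := fun n => by
    have := hc3' n; linarith
  have hmonoS : Monotone S := by
    intro m n hmn
    apply Set.Ioo_subset_Ioo
    · apply div_le_div_of_nonneg_left hπpos.le (by positivity)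
      have : (m:ℝ) ≤ (n:ℝ) := Nat.cast_le.mpr hmn
      linarith
    · have : π/(n+3 : ℝ) ≤ π/(m+3 : ℝ) := by
        apply div_le_div_of_nonneg_left hπpos.le (by positivity)
        have : (m:ℝ) ≤ (n:ℝ) := Nat.cast_le.mpr hmn
        linarith
      linarith
  have hUnion : (⋃ n, S n) = Set.Ioo (0:ℝ) π := by
    ext x
    simp only [hSdef, Set.mem_iUnion, Set.mem_Ioo]
    constructor
    · rintro ⟨n, h1, h2⟩
      exact ⟨lt_trans (hc3 n) h1, lt_of_lt_of_le h2 (by have := hc3 n; linarith)⟩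
    · rintro ⟨hx1, hx2⟩
      have hm : 0 < min x (π - x) := lt_min hx1 (by linarith)
      obtain ⟨n, hn⟩ := exists_nat_gt (π / min x (π - x))
      have hπm : π < (n:ℝ) * min x (π - x) := by
        rw [div_lt_iff₀ hm] at hn; linarith
      have hlt : π/(n+3 : ℝ) < min x (π - x) := by
        rw [div_lt_iff₀ (by positivity)]
        have hn0 : (0:ℝ) ≤ (n:ℝ) := Nat.cast_nonneg n
        nlinarith [hm]
      exact ⟨n, lt_of_lt_of_le hlt (min_le_left _ _) |>.trans_le le_rfl,
        by have := lt_of_lt_of_le hlt (min_le_right _ _); linarith⟩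
  have htend := MeasureTheory.tendsto_setIntegral_of_monotone
    (fun n => measurableSet_Ioo) hmonoS (hUnion ▸ hFint)
  rw [hUnion] at htend
  -- each term bounded
  have hterm : ∀ n : ℕ, (∫ x in S n, F x) ≤ I1 + 2*I1' := by
    intro n
    refine le_of_not_gt fun hlt => ?_
    set ε := ((∫ x in S n, F x) - (I1 + 2*I1')) / 8 with hεdef
    have hε : 0 < ε := by rw [hεdef]; linarith
    obtain ⟨a, ha, haε⟩ := exists_pt_zero hi3 hHnonneg (hc3 n) (hcπ n) hε
    obtain ⟨b, hb, hbε⟩ := exists_pt_pi hi3 hHnonneg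
      (c := π - π/(n+3 : ℝ)) (by have := hcd n; have := hc3 n; linarith)
      (by have := hc3 n; linarith) hε
    have ha0 : 0 < a := ha.1
    have hbπ' : b < π := hb.2
    have hab : a ≤ b := by
      have h1 : a < π/(n+3 : ℝ) := ha.2
      have h2 : π - π/(n+3 : ℝ) < b := hb.1
      have := hcd n; linarith
    have haIoo : a ∈ Set.Ioo (0:ℝ) π := ⟨ha0, lt_trans ha.2 (hcπ n)⟩
    have hbIoo : b ∈ Set.Ioo (0:ℝ) π := ⟨by have := hb.1; have := hc3 n; nlinarith [hcd n], hbπ'⟩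
    -- boundary bounds
    have hBa : |f a ^ 2 * Gaux a| < ε := by
      have h1 := hbdry a haIoo
      have h2 : (f a ^ 2 / Real.sin a ^ 3) * Real.sin a ≤ (f a ^ 2 / Real.sin a ^ 3) * a := by
        gcongr <;> first | exact hHnonneg a haIoo | exact Real.sin_le ha0.le
      have h3 : (f a ^ 2 / Real.sin a ^ 3) * a = a * (f a ^ 2 / Real.sin a ^ 3) := mul_comm _ _
      calc |f a ^ 2 * Gaux a| ≤ _ := h1
        _ ≤ (f a ^ 2 / Real.sin a ^ 3) * a := h2
        _ = a * (f a ^ 2 / Real.sin a ^ 3) := h3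
        _ < ε := haε
    have hBb : |f b ^ 2 * Gaux b| < ε := by
      have h1 := hbdry b hbIoo
      have hsb : Real.sin b ≤ π - b := by
        rw [← Real.sin_pi_sub]
        exact Real.sin_le (by linarith)
      have h2 : (f b ^ 2 / Real.sin b ^ 3) * Real.sin b ≤ (f b ^ 2 / Real.sin b ^ 3) * (π - b) := by
        gcongr <;> first | exact hHnonneg b hbIoo | exact hsb
      calc |f b ^ 2 * Gaux b| ≤ _ := h1
        _ ≤ (f b ^ 2 / Real.sin b ^ 3) * (π - b) := h2
        _ = (π - b) * (f b ^ 2 / Real.sin b ^ 3) := mul_comm _ _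
        _ < ε := hbε
    have hB : f b ^ 2 * Gaux b - f a ^ 2 * Gaux a ≤ 2*ε := by
      have h1 : f b ^ 2 * Gaux b ≤ |f b ^ 2 * Gaux b| := le_abs_self _
      have h2 : -(f a ^ 2 * Gaux a) ≤ |f a ^ 2 * Gaux a| := neg_le_abs _
      linarith
    -- integral comparison
    have hK := key a b ha0 hab hbπ'
    have hSle : (∫ x in S n, F x) ≤ ∫ x in a..b, F x := by
      rw [intervalIntegral.integral_of_le hab]
      apply setIntegral_mono_set (hFint.mono_set ?sub1) ?nn (HasSubset.Subset.eventuallyLE ?sub2)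
      case sub1 => exact fun x hx => ⟨lt_trans ha0 hx.1, lt_of_le_of_lt hx.2 hbπ'⟩
      case nn =>
        rw [EventuallyLE, ae_restrict_iff' measurableSet_Ioc]
        filter_upwards with x hx
        exact hFnonneg x ⟨lt_trans ha0 hx.1, lt_of_le_of_lt hx.2 hbπ'⟩
      case sub2 =>
        intro x hx
        rw [hSdef] at hx
        simp only [Set.mem_Ioo] at hx
        exact ⟨lt_trans ha.2 hx.1, le_of_lt (lt_trans hx.2 hb.1)⟩
    rw [hεdef] at *
    linarith [hK, hSle, hB]
  have hglob : (∫ x in Set.Ioo (0:ℝ) π, F x) ≤ I1 + 2*I1' :=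
    le_of_tendsto htend (Filter.Eventually.of_forall hterm)
  -- final assembly
  have hsplit : (∫ θ in Set.Ioo (0:ℝ) π, f θ ^ 2 / Real.sin θ ^ 3)
      = I1 + ∫ x in Set.Ioo (0:ℝ) π, F x := by
    rw [hI1def, ← MeasureTheory.integral_add hi1 hFint]
    apply setIntegral_congr_fun measurableSet_Ioo
    intro x hx
    have hs := hsin x hx
    have hpy := Real.sin_sq_add_cos_sq x
    have : f x ^ 2 / Real.sin x ^ 3 = f x ^ 2 / Real.sin x + F x := by
      rw [hFdef]
      field_simp
      linear_combination (-(f x ^ 2)) * hpy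
    simpa using this
  rw [hsplit]
  linarith [hglob, hI1nonneg]
end
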